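/- Assume ‖x_i‖₂ ≤ 1 for all i. There exists a constant C > 0, depending only on ℓ, such that with probability at least 1 − δ/2 over the random initialization of W₀ (i.i.d. N(0,1) entries), ‖G_{W₀} − K‖_F ≤ C n √(log(2n/δ)/M), and consequently ‖G_{W₀} − K‖₂ ≤ C n √(log(2n/δ)/M). -/

import Mathlib

open Matrix MeasureTheory ProbabilityTheory
open scoped ENNReal

/-- Euclidean norm of a real vector. -/
noncomputable def eNorm {n : Type*} [Fintype n] (v : n → ℝ) : ℝ :=
  Real.sqrt (∑ i, v i ^ 2)

/-- Frobenius norm of a real matrix. -/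
noncomputable def frobNorm {m n : Type*} [Fintype m] [Fintype n] (A : Matrix m n ℝ) : ℝ :=
  Real.sqrt (∑ i, ∑ j, A i j ^ 2)

/-- Spectral (ℓ²-operator) norm of a real matrix. -/
noncomputable def specNorm {m n : Type*} [Fintype m] [Fintype n] [DecidableEq n]
    (A : Matrix m n ℝ) : ℝ :=
  ‖LinearMap.toContinuousLinearMap (Matrix.toEuclideanLin A)‖

/-- The Gram matrix of the neural tangent kernel of the two-layer network at parameter `W`. -/
noncomputable def gramNTK (M d n : ℕ) (σ' : ℝ → ℝ) (x : Fin n → Fin d → ℝ)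
    (W : Fin M → Fin d → ℝ) : Matrix (Fin n) (Fin n) ℝ :=
  Matrix.of fun i j => (M : ℝ)⁻¹ * ∑ r, (x i ⬝ᵥ x j) * σ' (W r ⬝ᵥ x i) * σ' (W r ⬝ᵥ x j)

/-- The NTK limit kernel matrix `K_{ij} = E_{w∼N(0,I_d)}[x_iᵀx_j σ'(w·x_i)σ'(w·x_j)]`. -/
noncomputable def ntkKernel (d n : ℕ) (σ' : ℝ → ℝ) (x : Fin n → Fin d → ℝ) :
    Matrix (Fin n) (Fin n) ℝ :=
  Matrix.of fun i j =>
    ∫ w : Fin d → ℝ, (x i ⬝ᵥ x j) * σ' (w ⬝ᵥ x i) * σ' (w ⬝ᵥ x j)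
      ∂(Measure.pi fun _ : Fin d => gaussianReal 0 1)

/-- i.i.d. standard Gaussian initialization of the first-layer weights. -/
noncomputable def gaussInit (M d : ℕ) : Measure (Fin M → Fin d → ℝ) :=
  Measure.pi fun _ => Measure.pi fun _ => gaussianReal 0 1

/-! ### Auxiliary lemmas -/

lemma exp_le_quad {x : ℝ} (hx : |x| ≤ 1) : Real.exp x ≤ 1 + x + x ^ 2 := by
  have h := Real.exp_bound hx (n := 2) (by norm_num)
  have h2 : |Real.exp x - (1 + x)| ≤ |x| ^ 2 * (3 / (2 * 2)) := by
    simpa [Finset.sum_range_succ, Nat.factorial] using h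
  have h3 : Real.exp x - (1 + x) ≤ x ^ 2 * (3 / 4) := by
    calc Real.exp x - (1 + x) ≤ |Real.exp x - (1 + x)| := le_abs_self _
    _ ≤ |x| ^ 2 * (3 / (2 * 2)) := h2
    _ = x ^ 2 * (3 / 4) := by rw [sq_abs]; norm_num
  nlinarith [sq_nonneg x]

lemma specNorm_le_frobNorm {m n : Type*} [Fintype m] [Fintype n] [DecidableEq n]
    (A : Matrix m n ℝ) : specNorm A ≤ frobNorm A := by
  have hfrob : 0 ≤ frobNorm A := Real.sqrt_nonneg _
  refine ContinuousLinearMap.opNorm_le_bound _ hfrob ?_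
  intro v
  have hcoe : (LinearMap.toContinuousLinearMap (Matrix.toEuclideanLin A)) v
      = (Matrix.toEuclideanLin A) v := rfl
  rw [hcoe]
  have hv : ‖v‖ ^ 2 = ∑ j, v j ^ 2 := by
    rw [EuclideanSpace.norm_eq, Real.sq_sqrt (by positivity)]
    congr 1; ext j; rw [Real.norm_eq_abs, sq_abs]
  have hAv : ∀ i, (Matrix.toEuclideanLin A) v i = ∑ j, A i j * v j := by
    intro i
    simp [Matrix.toEuclideanLin_apply, Matrix.mulVec, dotProduct]
  have hnorm : ‖(Matrix.toEuclideanLin A) v‖ ^ 2 = ∑ i, (∑ j, A i j * v j) ^ 2 := by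
    rw [EuclideanSpace.norm_eq, Real.sq_sqrt (by positivity)]
    exact Finset.sum_congr rfl fun i _ => by rw [Real.norm_eq_abs, sq_abs, hAv]
  have key : ‖(Matrix.toEuclideanLin A) v‖ ^ 2 ≤ (frobNorm A * ‖v‖) ^ 2 := by
    rw [hnorm, mul_pow, frobNorm, Real.sq_sqrt (by positivity), hv, Finset.sum_mul]
    refine Finset.sum_le_sum fun i _ => ?_
    exact Finset.sum_mul_sq_le_sq_mul_sq Finset.univ _ _
  have h1 : (0:ℝ) ≤ frobNorm A * ‖v‖ := by positivity
  nlinarith [norm_nonneg ((Matrix.toEuclideanLin A) v)]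

section PiMeasure

variable {α : Type*} [MeasurableSpace α]

lemma map_eval_pi {M : ℕ} (ν : Measure α) [IsProbabilityMeasure ν] (r : Fin M) :
    (Measure.pi fun _ : Fin M => ν).map (Function.eval r) = ν := by
  refine Measure.ext fun s hs => ?_
  rw [Measure.map_apply (measurable_pi_apply r) hs,
    ← Set.univ_pi_update_univ, Measure.pi_pi]
  rw [Fintype.prod_eq_single r]
  · simp
  · intro i hi; simp [Function.update_of_ne hi]

lemma pi_eval_preimage {M : ℕ} (ν : Measure α) [IsProbabilityMeasure ν] (r : Fin M)
    {s : Set α} (hs : MeasurableSet s) :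
    (Measure.pi fun _ : Fin M => ν) ((fun W : Fin M → α => W r) ⁻¹' s) = ν s := by
  have := map_eval_pi (M := M) ν r
  conv_rhs => rw [← this]
  rw [Measure.map_apply (measurable_pi_apply r) hs]

lemma iIndepFun_eval {M : ℕ} (ν : Measure α) [IsProbabilityMeasure ν] :
    iIndepFun
      (fun r (W : Fin M → α) => W r) (Measure.pi fun _ : Fin M => ν) := by
  rw [iIndepFun_iff_measure_inter_preimage_eq_mul]
  intro S sets hsets
  classical
  have hset : (⋂ i ∈ S, (fun W : Fin M → α => W i) ⁻¹' sets i)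
      = Set.pi Set.univ (fun i => if i ∈ S then sets i else Set.univ) := by
    ext W
    simp only [Set.mem_iInter, Set.mem_preimage, Set.mem_pi, Set.mem_univ, true_implies]
    constructor
    · intro h i
      by_cases hi : i ∈ S
      · simpa [hi] using h i hi
      · simp [hi]
    · intro h i hi
      have := h i; simpa [hi] using this
  rw [hset, Measure.pi_pi]
  rw [← Finset.prod_subset (Finset.subset_univ S)]
  · exact Finset.prod_congr rfl fun i hi => by
      simp only [hi, if_true]
      exact (pi_eval_preimage ν i (hsets i hi)).symm
  · intro i _ hi; simp [hi]

end PiMeasure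

section Tail

variable {Ω : Type*} [MeasurableSpace Ω] {μ : Measure Ω}

lemma integrable_of_abs_le [IsProbabilityMeasure μ] {f : Ω → ℝ} (hf : Measurable f)
    {c : ℝ} (hbd : ∀ ω, |f ω| ≤ c) : Integrable f μ :=
  Integrable.mono' (integrable_const c) hf.aestronglyMeasurable
    (ae_of_all _ fun ω => by simpa using hbd ω)

lemma mgf_le_of_bounded [IsProbabilityMeasure μ] {Z : Ω → ℝ} (hZ : Measurable Z)
    {c l : ℝ} (hbd : ∀ ω, |Z ω| ≤ c) (hmean : ∫ ω, Z ω ∂μ = 0)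
    (hl0 : 0 ≤ l) (hlc : l * c ≤ 1) :
    mgf Z μ l ≤ Real.exp (l ^ 2 * c ^ 2) := by
  have hint1 : Integrable Z μ := integrable_of_abs_le hZ hbd
  have hint2 : Integrable (fun ω => Z ω ^ 2) μ :=
    integrable_of_abs_le (hZ.pow_const 2) (c := c ^ 2)
      (fun ω => by rw [abs_pow]; exact pow_le_pow_left₀ (abs_nonneg _) (hbd ω) 2)
  have hintE : Integrable (fun ω => Real.exp (l * Z ω)) μ :=
    integrable_of_abs_le ((hZ.const_mul l).exp) (c := Real.exp (l * c))
      (fun ω => by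
        rw [abs_of_pos (Real.exp_pos _), Real.exp_le_exp]
        exact mul_le_mul_of_nonneg_left ((le_abs_self _).trans (hbd ω)) hl0)
  have hptwise : ∀ ω, Real.exp (l * Z ω) ≤ 1 + l * Z ω + (l * Z ω) ^ 2 := by
    intro ω
    refine exp_le_quad ?_
    rw [abs_mul, abs_of_nonneg hl0]
    calc l * |Z ω| ≤ l * c := mul_le_mul_of_nonneg_left (hbd ω) hl0
    _ ≤ 1 := hlc
  have hint3 : Integrable (fun ω => 1 + l * Z ω + (l * Z ω) ^ 2) μ := by
    refine (Integrable.add (Integrable.add (integrable_const 1) (hint1.const_mul l)) ?_)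
    simpa [mul_pow] using (hint2.const_mul (l ^ 2))
  have e1 : Integrable (fun ω => 1 + l * Z ω) μ :=
    (integrable_const 1).add (hint1.const_mul l)
  have e2 : Integrable (fun ω => (l * Z ω) ^ 2) μ := by
    simpa [mul_pow] using hint2.const_mul (l ^ 2)
  calc mgf Z μ l = ∫ ω, Real.exp (l * Z ω) ∂μ := rfl
  _ ≤ ∫ ω, (1 + l * Z ω + (l * Z ω) ^ 2) ∂μ :=
      integral_mono hintE hint3 hptwise
  _ = 1 + l * ∫ ω, Z ω ∂μ + l ^ 2 * ∫ ω, Z ω ^ 2 ∂μ := by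
      rw [integral_add e1 e2, integral_add (integrable_const 1) (hint1.const_mul l)]
      simp [integral_const, integral_const_mul, mul_pow]
  _ ≤ 1 + l ^ 2 * c ^ 2 := by
      rw [hmean, mul_zero, add_zero]
      have : ∫ ω, Z ω ^ 2 ∂μ ≤ c ^ 2 := by
        calc ∫ ω, Z ω ^ 2 ∂μ ≤ ∫ _, c ^ 2 ∂μ := by
              refine integral_mono hint2 (integrable_const _) fun ω => ?_
              rw [← sq_abs]
              exact pow_le_pow_left₀ (abs_nonneg _) (hbd ω) 2
        _ = c ^ 2 := by simp
      nlinarith [sq_nonneg l]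
  _ ≤ Real.exp (l ^ 2 * c ^ 2) := by linarith [Real.add_one_le_exp (l ^ 2 * c ^ 2)]

lemma tail_le [IsProbabilityMeasure μ] {M : ℕ} (hM : 0 < M) {Z : Fin M → Ω → ℝ}
    (hindep : iIndepFun Z μ)
    (hmeas : ∀ r, Measurable (Z r))
    {c t : ℝ} (hc : 0 < c) (hbd : ∀ r ω, |Z r ω| ≤ c)
    (hmean : ∀ r, ∫ ω, Z r ω ∂μ = 0) (ht : 0 < t) :
    (μ {ω | t ≤ (M : ℝ)⁻¹ * ∑ r, Z r ω}).toReal ≤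
      Real.exp (-(M * t ^ 2 / (4 * c ^ 2))) := by
  have hMR : (0:ℝ) < M := Nat.cast_pos.mpr hM
  by_cases hbig : 2 * c < t
  · have hempty : {ω | t ≤ (M : ℝ)⁻¹ * ∑ r, Z r ω} = ∅ := by
      ext ω
      simp only [Set.mem_setOf_eq, Set.mem_empty_iff_false, iff_false, not_le]
      have hsum : ∑ r, Z r ω ≤ M * c := by
        calc ∑ r, Z r ω ≤ ∑ r : Fin M, c := Finset.sum_le_sum fun r _ =>
              (le_abs_self _).trans (hbd r ω)
        _ = M * c := by simp [mul_comm]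
      calc (M : ℝ)⁻¹ * ∑ r, Z r ω ≤ (M : ℝ)⁻¹ * (M * c) := by
            exact mul_le_mul_of_nonneg_left hsum (by positivity)
      _ = c := by field_simp
      _ < t := by linarith
    rw [hempty]
    simp [(Real.exp_pos _).le]
  · push_neg at hbig
    set l : ℝ := t / (2 * c ^ 2) with hl_def
    have hl0 : 0 ≤ l := by positivity
    have hlc : l * c ≤ 1 := by
      rw [hl_def]
      rw [div_mul_eq_mul_div, div_le_one (by positivity)]
      nlinarith
    set S : Ω → ℝ := ∑ r, Z r with hS_def
    have hSapp : ∀ ω, S ω = ∑ r, Z r ω := fun ω => by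
      rw [hS_def]; exact Finset.sum_apply ω Finset.univ Z
    have hSmeas : Measurable S := by
      have : Measurable fun ω => ∑ r, Z r ω := Finset.measurable_sum _ fun r _ => hmeas r
      convert this using 1
      ext ω; exact hSapp ω
    have hSbd : ∀ ω, |S ω| ≤ M * c := by
      intro ω
      rw [hSapp]
      calc |∑ r, Z r ω| ≤ ∑ r : Fin M, |Z r ω| := Finset.abs_sum_le_sum_abs _ _
      _ ≤ ∑ r : Fin M, c := Finset.sum_le_sum fun r _ => hbd r ω
      _ = M * c := by simp [mul_comm]
    have hint : Integrable (fun ω => Real.exp (l * S ω)) μ :=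
      integrable_of_abs_le ((hSmeas.const_mul l).exp) (c := Real.exp (l * (M * c)))
        (fun ω => by
          rw [abs_of_pos (Real.exp_pos _), Real.exp_le_exp]
          exact mul_le_mul_of_nonneg_left ((le_abs_self _).trans (hSbd ω)) hl0)
    have hset : {ω | t ≤ (M : ℝ)⁻¹ * ∑ r, Z r ω} = {ω | M * t ≤ S ω} := by
      ext ω
      simp only [Set.mem_setOf_eq, hSapp]
      constructor
      · intro h
        have := mul_le_mul_of_nonneg_left h hMR.le
        rw [← mul_assoc, mul_inv_cancel₀ hMR.ne', one_mul] at this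
        exact this
      · intro h
        rw [inv_mul_eq_div, le_div_iff₀ hMR]
        linarith
    rw [hset]
    calc (μ {ω | M * t ≤ S ω}).toReal ≤ Real.exp (-l * (M * t)) * mgf S μ l :=
          measure_ge_le_exp_mul_mgf (M * t) hl0 hint
    _ ≤ Real.exp (-l * (M * t)) * Real.exp (l ^ 2 * c ^ 2) ^ (M : ℕ) := by
        refine mul_le_mul_of_nonneg_left ?_ (Real.exp_pos _).le
        rw [hS_def, hindep.mgf_sum hmeas Finset.univ]
        calc ∏ r : Fin M, mgf (Z r) μ l ≤ ∏ _r : Fin M, Real.exp (l ^ 2 * c ^ 2) :=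
              Finset.prod_le_prod (fun r _ => mgf_nonneg)
                (fun r _ => mgf_le_of_bounded (hmeas r) (hbd r) (hmean r) hl0 hlc)
        _ = Real.exp (l ^ 2 * c ^ 2) ^ (M : ℕ) := by
              rw [Finset.prod_const, Finset.card_univ, Fintype.card_fin]
    _ = Real.exp (-l * (M * t) + M * (l ^ 2 * c ^ 2)) := by
        rw [← Real.exp_nat_mul, ← Real.exp_add]
    _ = Real.exp (-(M * t ^ 2 / (4 * c ^ 2))) := by
        congr 1
        rw [hl_def]
        field_simp
        ring

end Tail

set_option maxHeartbeats 2000000 in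
theorem gram_concentration_at_init (ℓ : ℝ) :
    ∃ C : ℝ, 0 < C ∧
      ∀ (M d n : ℕ), 0 < M →
        ∀ (σ σ' : ℝ → ℝ),
          (∀ t : ℝ, HasDerivAt σ (σ' t) t) →
          (∀ t : ℝ, |σ' t| ≤ ℓ) →
        ∀ x : Fin n → Fin d → ℝ, (∀ i, eNorm (x i) ≤ 1) →
        ∀ δ : ℝ, 0 < δ → δ < 1 →
          ENNReal.ofReal (1 - δ / 2) ≤
            gaussInit M d
              {W | frobNorm (gramNTK M d n σ' x W - ntkKernel d n σ' x) ≤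
                    C * n * Real.sqrt (Real.log (2 * n / δ) / M) ∧
                  specNorm (gramNTK M d n σ' x W - ntkKernel d n σ' x) ≤
                    C * n * Real.sqrt (Real.log (2 * n / δ) / M)} := by
  classical
  refine ⟨8 * ℓ ^ 2 + 4, by positivity, ?_⟩
  intro M d n hM σ σ' hσ hσ'bd x hx δ hδ0 hδ1
  haveI : IsProbabilityMeasure (gaussInit M d) := by
    unfold gaussInit; infer_instance
  have hδhalf : ENNReal.ofReal (1 - δ / 2) ≤ 1 := by
    rw [← ENNReal.ofReal_one]
    exact ENNReal.ofReal_le_ofReal (by linarith)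
  rcases Nat.eq_zero_or_pos n with hn0 | hn
  · subst hn0
    have hset : {W : Fin M → Fin d → ℝ |
        frobNorm (gramNTK M d 0 σ' x W - ntkKernel d 0 σ' x) ≤
          (8 * ℓ ^ 2 + 4) * (0:ℕ) * Real.sqrt (Real.log (2 * (0:ℕ) / δ) / M) ∧
        specNorm (gramNTK M d 0 σ' x W - ntkKernel d 0 σ' x) ≤
          (8 * ℓ ^ 2 + 4) * (0:ℕ) * Real.sqrt (Real.log (2 * (0:ℕ) / δ) / M)} = Set.univ := by
      refine Set.eq_univ_of_forall fun W => ?_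
      have hfrob : frobNorm (gramNTK M d 0 σ' x W - ntkKernel d 0 σ' x) = 0 := by
        simp [frobNorm]
      have hspec : specNorm (gramNTK M d 0 σ' x W - ntkKernel d 0 σ' x) = 0 := by
        rw [specNorm]
        have h0 : ∀ v, (LinearMap.toContinuousLinearMap
            (Matrix.toEuclideanLin (gramNTK M d 0 σ' x W - ntkKernel d 0 σ' x))) v = 0 := by
          intro v
          exact PiLp.ext fun i => Fin.elim0 i
        have h1 : (LinearMap.toContinuousLinearMap
            (Matrix.toEuclideanLin (gramNTK M d 0 σ' x W - ntkKernel d 0 σ' x))) = 0 :=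
          ContinuousLinearMap.ext fun v => (h0 v).trans rfl
        rw [h1, norm_zero]
      constructor <;> simp [hfrob, hspec]
    rw [hset]
    simpa using hδhalf
  -- main case : 1 ≤ n
  have hMR : (0:ℝ) < M := Nat.cast_pos.mpr hM
  have hnR : (0:ℝ) < n := Nat.cast_pos.mpr hn
  have hn1 : (1:ℝ) ≤ n := Nat.one_le_cast.mpr hn
  have hℓ0 : 0 ≤ ℓ := (abs_nonneg (σ' 0)).trans (hσ'bd 0)
  set ν : Measure (Fin d → ℝ) := Measure.pi fun _ : Fin d => gaussianReal 0 1 with hν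
  haveI : IsProbabilityMeasure ν := by rw [hν]; infer_instance
  set μ : Measure (Fin M → Fin d → ℝ) := gaussInit M d with hμ
  have hgauss : μ = Measure.pi fun _ : Fin M => ν := rfl
  have hσ'meas : Measurable σ' := by
    have : σ' = deriv σ := funext fun t => ((hσ t).deriv).symm
    rw [this]; exact measurable_deriv σ
  have hdotmeas : ∀ v : Fin d → ℝ, Measurable fun w : Fin d → ℝ => w ⬝ᵥ v := by
    intro v
    simp only [dotProduct]
    exact Finset.measurable_sum _ fun k _ => (measurable_pi_apply k).mul_const _
  set f : Fin n → Fin n → (Fin d → ℝ) → ℝ :=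
    fun i j w => (x i ⬝ᵥ x j) * σ' (w ⬝ᵥ x i) * σ' (w ⬝ᵥ x j) with hf
  have hfmeas : ∀ i j, Measurable (f i j) := fun i j =>
    (measurable_const.mul (hσ'meas.comp (hdotmeas (x i)))).mul
      (hσ'meas.comp (hdotmeas (x j)))
  have hx2 : ∀ i, ∑ k, x i k ^ 2 ≤ 1 := by
    intro i
    have h1 := hx i
    rw [eNorm] at h1
    have h2 : (0:ℝ) ≤ ∑ k, x i k ^ 2 := by positivity
    nlinarith [Real.sq_sqrt h2, Real.sqrt_nonneg (∑ k, x i k ^ 2)]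
  have hdotbd : ∀ i j, |x i ⬝ᵥ x j| ≤ 1 := by
    intro i j
    have h := Finset.sum_mul_sq_le_sq_mul_sq Finset.univ (x i) (x j)
    have hdot : x i ⬝ᵥ x j = ∑ k, x i k * x j k := rfl
    have h2 : (x i ⬝ᵥ x j) ^ 2 ≤ 1 := by
      rw [hdot]
      calc (∑ k, x i k * x j k) ^ 2 ≤ (∑ k, x i k ^ 2) * ∑ k, x j k ^ 2 := h
      _ ≤ 1 := by
          have := hx2 i; have := hx2 j
          have h3 : (0:ℝ) ≤ ∑ k, x i k ^ 2 := by positivity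
          have h4 : (0:ℝ) ≤ ∑ k, x j k ^ 2 := by positivity
          nlinarith
    nlinarith [sq_abs (x i ⬝ᵥ x j), abs_nonneg (x i ⬝ᵥ x j)]
  have hfbd : ∀ i j w, |f i j w| ≤ ℓ ^ 2 := by
    intro i j w
    rw [hf]
    simp only []
    rw [abs_mul, abs_mul]
    calc |x i ⬝ᵥ x j| * |σ' (w ⬝ᵥ x i)| * |σ' (w ⬝ᵥ x j)| ≤ 1 * ℓ * ℓ := by
          refine mul_le_mul (mul_le_mul (hdotbd i j) (hσ'bd _) (abs_nonneg _) zero_le_one)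
            (hσ'bd _) (abs_nonneg _) (by positivity)
    _ = ℓ ^ 2 := by ring
  set K : Fin n → Fin n → ℝ := fun i j => ∫ w, f i j w ∂ν with hK
  have hKbd : ∀ i j, |K i j| ≤ ℓ ^ 2 := by
    intro i j
    rw [hK]
    have := norm_integral_le_of_norm_le_const (μ := ν) (f := f i j) (C := ℓ ^ 2)
      (ae_of_all _ fun w => by rw [Real.norm_eq_abs]; exact hfbd i j w)
    rw [Real.norm_eq_abs] at this
    simpa using this
  set c : ℝ := 2 * ℓ ^ 2 + 1 with hc_def
  have hc : 0 < c := by positivity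
  set Z : Fin n → Fin n → Fin M → (Fin M → Fin d → ℝ) → ℝ :=
    fun i j r W => f i j (W r) - K i j with hZ
  have hZmeas : ∀ i j r, Measurable (Z i j r) := fun i j r =>
    ((hfmeas i j).comp (measurable_pi_apply r)).sub measurable_const
  have hZbd : ∀ i j r W, |Z i j r W| ≤ c := by
    intro i j r W
    calc |Z i j r W| ≤ |f i j (W r)| + |K i j| := abs_sub _ _
    _ ≤ c := by have := hfbd i j (W r); have := hKbd i j; rw [hc_def]; linarith
  have hint_f : ∀ i j r, ∫ W, f i j (W r) ∂μ = K i j := by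
    intro i j r
    have h1 : ∫ w, f i j w ∂((Measure.pi fun _ : Fin M => ν).map (Function.eval r))
        = ∫ W, f i j (W r) ∂(Measure.pi fun _ : Fin M => ν) :=
      integral_map (measurable_pi_apply r).aemeasurable (hfmeas i j).aestronglyMeasurable
    rw [map_eval_pi (M := M) ν r] at h1
    rw [hgauss, ← h1]
  have hZmean : ∀ i j r, ∫ W, Z i j r W ∂μ = 0 := by
    intro i j r
    have hint : Integrable (fun W => f i j (W r)) μ :=
      integrable_of_abs_le ((hfmeas i j).comp (measurable_pi_apply r))
        (fun W => hfbd i j (W r))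
    rw [hZ]
    simp only []
    rw [integral_sub hint (integrable_const _), hint_f i j r, integral_const]
    simp
  have hZindep : ∀ i j, iIndepFun
      (Z i j) μ := by
    intro i j
    have := (iIndepFun_eval (M := M) ν).comp
      (fun _ => fun w : Fin d → ℝ => f i j w - K i j)
      (fun _ => (hfmeas i j).sub measurable_const)
    rw [hgauss]
    exact this
  have hMne : (M:ℝ) ≠ 0 := hMR.ne'
  have hentry : ∀ i j W, (gramNTK M d n σ' x W - ntkKernel d n σ' x) i j
      = (M:ℝ)⁻¹ * ∑ r, Z i j r W := by
    intro i j W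
    have h1 : (gramNTK M d n σ' x W - ntkKernel d n σ' x) i j
        = (M:ℝ)⁻¹ * (∑ r, f i j (W r)) - K i j := rfl
    rw [h1, hZ]
    simp only []
    rw [Finset.sum_sub_distrib, Finset.sum_const, Finset.card_univ, Fintype.card_fin,
      nsmul_eq_mul, mul_sub, ← mul_assoc, inv_mul_cancel₀ hMne, one_mul]
  set L : ℝ := Real.log (4 * n ^ 2 / δ) with hL_def
  have hL : 0 < L := by
    rw [hL_def]
    apply Real.log_pos
    rw [lt_div_iff₀ hδ0]
    nlinarith [hn1, hδ1]
  set t : ℝ := 2 * c * Real.sqrt (L / M) with ht_def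
  have hsqrtpos : 0 < Real.sqrt (L / M) := Real.sqrt_pos.mpr (by positivity)
  have ht : 0 < t := by rw [ht_def]; positivity
  have hexp : Real.exp (-(M * t ^ 2 / (4 * c ^ 2))) = δ / (4 * n ^ 2) := by
    have ht2 : t ^ 2 = 4 * c ^ 2 * (L / M) := by
      rw [ht_def, mul_pow, Real.sq_sqrt (by positivity)]
      ring
    have harg : M * t ^ 2 / (4 * c ^ 2) = L := by
      rw [ht2]; field_simp
    rw [harg, hL_def, Real.exp_neg, Real.exp_log (by positivity)]
    rw [inv_div]
  set badP : Fin n → Fin n → Set (Fin M → Fin d → ℝ) :=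
    fun i j => {W | t ≤ (M:ℝ)⁻¹ * ∑ r, Z i j r W} with hbadP
  set badN : Fin n → Fin n → Set (Fin M → Fin d → ℝ) :=
    fun i j => {W | t ≤ (M:ℝ)⁻¹ * ∑ r, -Z i j r W} with hbadN
  have havgmeas : ∀ i j, Measurable fun W => (M:ℝ)⁻¹ * ∑ r, Z i j r W := by
    intro i j
    exact (Finset.measurable_sum _ fun r _ => hZmeas i j r).const_mul _
  have hbadPmeas : ∀ i j, MeasurableSet (badP i j) := fun i j =>
    measurableSet_le measurable_const (havgmeas i j)
  have hbadNmeas : ∀ i j, MeasurableSet (badN i j) := fun i j =>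
    measurableSet_le measurable_const
      ((Finset.measurable_sum _ fun r _ => (hZmeas i j r).neg).const_mul _)
  have htailP : ∀ i j, μ (badP i j) ≤ ENNReal.ofReal (δ / (4 * n ^ 2)) := by
    intro i j
    rw [← hexp]
    rw [ENNReal.le_ofReal_iff_toReal_le (measure_ne_top μ _) (Real.exp_pos _).le]
    exact tail_le hM (hZindep i j) (hZmeas i j) hc (hZbd i j) (hZmean i j) ht
  have htailN : ∀ i j, μ (badN i j) ≤ ENNReal.ofReal (δ / (4 * n ^ 2)) := by
    intro i j
    rw [← hexp]
    rw [ENNReal.le_ofReal_iff_toReal_le (measure_ne_top μ _) (Real.exp_pos _).le]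
    have hindep' : iIndepFun
        (fun r W => -Z i j r W) μ :=
      (hZindep i j).comp (fun _ => fun y : ℝ => -y) (fun _ => measurable_neg)
    refine tail_le hM hindep' (fun r => (hZmeas i j r).neg) hc
      (fun r W => by rw [abs_neg]; exact hZbd i j r W)
      (fun r => by rw [integral_neg, hZmean i j r, neg_zero]) ht
  set bad : Set (Fin M → Fin d → ℝ) := ⋃ i, ⋃ j, (badP i j ∪ badN i j) with hbad
  have hbadmeas : MeasurableSet bad :=
    MeasurableSet.iUnion fun i => MeasurableSet.iUnion fun j =>
      (hbadPmeas i j).union (hbadNmeas i j)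
  have hbadle : μ bad ≤ ENNReal.ofReal (δ / 2) := by
    have hpair : ∀ i j, μ (badP i j ∪ badN i j) ≤ ENNReal.ofReal (δ / (2 * n ^ 2)) := by
      intro i j
      calc μ (badP i j ∪ badN i j) ≤ μ (badP i j) + μ (badN i j) := measure_union_le _ _
      _ ≤ ENNReal.ofReal (δ / (4 * n ^ 2)) + ENNReal.ofReal (δ / (4 * n ^ 2)) :=
          add_le_add (htailP i j) (htailN i j)
      _ = ENNReal.ofReal (δ / (2 * n ^ 2)) := by
          rw [← ENNReal.ofReal_add (by positivity) (by positivity)]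
          congr 1
          field_simp
          ring
    calc μ bad ≤ ∑' i : Fin n, μ (⋃ j, (badP i j ∪ badN i j)) := measure_iUnion_le _
    _ ≤ ∑' i : Fin n, ∑' j : Fin n, μ (badP i j ∪ badN i j) :=
        ENNReal.tsum_le_tsum fun i => measure_iUnion_le _
    _ ≤ ∑' i : Fin n, ∑' j : Fin n, ENNReal.ofReal (δ / (2 * n ^ 2)) :=
        ENNReal.tsum_le_tsum fun i => ENNReal.tsum_le_tsum fun j => hpair i j
    _ = (n : ℝ≥0∞) * ((n : ℝ≥0∞) * ENNReal.ofReal (δ / (2 * n ^ 2))) := by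
        rw [tsum_fintype]
        simp only [tsum_fintype, Finset.sum_const, Finset.card_univ, Fintype.card_fin,
          nsmul_eq_mul]
    _ = ENNReal.ofReal (δ / 2) := by
        rw [show ((n : ℝ≥0∞)) = ENNReal.ofReal (n : ℝ) by
            rw [ENNReal.ofReal_natCast],
          ← ENNReal.ofReal_mul (by positivity), ← ENNReal.ofReal_mul (by positivity)]
        congr 1
        field_simp
  -- from the complement of bad to the good event
  have hCpos : (0:ℝ) < 8 * ℓ ^ 2 + 4 := by positivity
  set L' : ℝ := Real.log (2 * n / δ) with hL'_def
  have hL' : 0 < L' := by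
    rw [hL'_def]
    apply Real.log_pos
    rw [lt_div_iff₀ hδ0]
    nlinarith [hn1, hδ1]
  have ht_le : t ≤ (8 * ℓ ^ 2 + 4) * Real.sqrt (L' / M) := by
    have hLle : L ≤ 2 * L' := by
      rw [hL_def, hL'_def]
      rw [show (2:ℝ) * Real.log (2 * n / δ) = Real.log ((2 * n / δ) ^ 2) by
        rw [Real.log_pow]; push_cast; ring]
      apply Real.log_le_log (by positivity)
      rw [div_pow]
      rw [div_le_div_iff₀ (by positivity) (by positivity)]
      have hδ2 : δ ^ 2 ≤ δ := by nlinarith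
      nlinarith [sq_nonneg (n:ℝ)]
    have hsqrt2 : Real.sqrt 2 ≤ 2 := by
      nlinarith [Real.sq_sqrt (by norm_num : (0:ℝ) ≤ 2), Real.sqrt_nonneg 2]
    have h1 : Real.sqrt (L / M) ≤ Real.sqrt 2 * Real.sqrt (L' / M) := by
      rw [← Real.sqrt_mul (by norm_num)]
      apply Real.sqrt_le_sqrt
      rw [show (2:ℝ) * (L' / ↑M) = (2 * L') / ↑M by ring]
      gcongr
    calc t = 2 * c * Real.sqrt (L / M) := ht_def
    _ ≤ 2 * c * (Real.sqrt 2 * Real.sqrt (L' / M)) := by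
        exact mul_le_mul_of_nonneg_left h1 (by positivity)
    _ ≤ (8 * ℓ ^ 2 + 4) * Real.sqrt (L' / M) := by
        have hs : 0 ≤ Real.sqrt (L' / M) := Real.sqrt_nonneg _
        have h4c : 2 * c * 2 = 8 * ℓ ^ 2 + 4 := by rw [hc_def]; ring
        nlinarith [mul_le_mul_of_nonneg_right hsqrt2 hs, hc.le]
  have hsub : badᶜ ⊆ {W | frobNorm (gramNTK M d n σ' x W - ntkKernel d n σ' x) ≤
        (8 * ℓ ^ 2 + 4) * n * Real.sqrt (Real.log (2 * n / δ) / M) ∧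
      specNorm (gramNTK M d n σ' x W - ntkKernel d n σ' x) ≤
        (8 * ℓ ^ 2 + 4) * n * Real.sqrt (Real.log (2 * n / δ) / M)} := by
    intro W hW
    have hWn : ∀ i j, W ∉ badP i j ∧ W ∉ badN i j := by
      intro i j
      rw [Set.mem_compl_iff, hbad] at hW
      simp only [Set.mem_iUnion, Set.mem_union, not_exists, not_or] at hW
      exact hW i j
    have hWabs : ∀ i j, |(gramNTK M d n σ' x W - ntkKernel d n σ' x) i j| ≤ t := by
      intro i j
      obtain ⟨hP, hN⟩ := hWn i j
      rw [hbadP] at hP; rw [hbadN] at hN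
      simp only [Set.mem_setOf_eq, not_le] at hP hN
      rw [hentry i j W]
      rw [abs_le]
      constructor
      · have : (M:ℝ)⁻¹ * ∑ r, -Z i j r W = -((M:ℝ)⁻¹ * ∑ r, Z i j r W) := by
          rw [Finset.sum_neg_distrib, mul_neg]
        rw [this] at hN
        linarith
      · linarith
    have hfrob : frobNorm (gramNTK M d n σ' x W - ntkKernel d n σ' x) ≤ n * t := by
      rw [frobNorm]
      have hsum : ∑ i, ∑ j, (gramNTK M d n σ' x W - ntkKernel d n σ' x) i j ^ 2
          ≤ (n:ℝ) ^ 2 * t ^ 2 := by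
        calc ∑ i, ∑ j, (gramNTK M d n σ' x W - ntkKernel d n σ' x) i j ^ 2
            ≤ ∑ _i : Fin n, ∑ _j : Fin n, t ^ 2 := by
              refine Finset.sum_le_sum fun i _ => Finset.sum_le_sum fun j _ => ?_
              rw [← sq_abs]
              exact pow_le_pow_left₀ (abs_nonneg _) (hWabs i j) 2
        _ = (n:ℝ) ^ 2 * t ^ 2 := by
              simp [Finset.sum_const]
              ring
      calc Real.sqrt (∑ i, ∑ j, (gramNTK M d n σ' x W - ntkKernel d n σ' x) i j ^ 2)
          ≤ Real.sqrt ((n:ℝ) ^ 2 * t ^ 2) := Real.sqrt_le_sqrt hsum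
      _ = n * t := by
          rw [show (n:ℝ) ^ 2 * t ^ 2 = ((n:ℝ) * t) ^ 2 by ring,
            Real.sqrt_sq (by positivity)]
    have hfinal : (n:ℝ) * t ≤ (8 * ℓ ^ 2 + 4) * n * Real.sqrt (Real.log (2 * n / δ) / M) := by
      have h2 : (8 * ℓ ^ 2 + 4) * (n:ℝ) * Real.sqrt (Real.log (2 * n / δ) / M)
          = (n:ℝ) * ((8 * ℓ ^ 2 + 4) * Real.sqrt (L' / M)) := by
        rw [hL'_def]; ring
      rw [h2]
      exact mul_le_mul_of_nonneg_left ht_le hnR.le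
    refine ⟨hfrob.trans hfinal, ?_⟩
    exact (specNorm_le_frobNorm _).trans (hfrob.trans hfinal)
  calc ENNReal.ofReal (1 - δ / 2)
      = 1 - ENNReal.ofReal (δ / 2) := by
        rw [ENNReal.ofReal_sub _ (by positivity), ENNReal.ofReal_one]
  _ ≤ 1 - μ bad := tsub_le_tsub_left hbadle 1
  _ = μ badᶜ := (prob_compl_eq_one_sub hbadmeas).symm
  _ ≤ _ := measure_mono hsub
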